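/- arXiv:1804.11249 — 3 statements merged into one kernel-verified Lean document; each statement's English description precedes it below -/
import Mathlib

section
/- The smallest Lie algebra of 4×4 real matrices containing the symmetric model SYM (the span of the matrices S_{ij}, i < j) is the doubly stochastic model: equivalently, the span of the six S_{ij} together with all iterated commutators equals the 9-dimensional space of 4×4 matrices with all row and column sums zero. -/
/-- `S i j` : 1 in positions (i,j) and (j,i), -1 in positions (i,i) and (j,j),
0 elsewhere (for `i ≠ j`). -/
def S (i j : Fin 4) : Matrix (Fin 4) (Fin 4) ℝ :=
  fun a b => if (a = i ∧ b = j) ∨ (a = j ∧ b = i) then 1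
    else if a = b ∧ (a = i ∨ a = j) then -1 else 0

/-- The doubly stochastic model: 4×4 real matrices with all row and column sums zero. -/
def DS : Submodule ℝ (Matrix (Fin 4) (Fin 4) ℝ) where
  carrier := {A | (∀ i, ∑ j, A i j = 0) ∧ (∀ j, ∑ i, A i j = 0)}
  add_mem' := by
    rintro A B ⟨hA1, hA2⟩ ⟨hB1, hB2⟩
    constructor <;> intro i <;>
      simp [Matrix.add_apply, Finset.sum_add_distrib, hA1, hA2, hB1, hB2]
  zero_mem' := by simp
  smul_mem' := by
    rintro c A ⟨hA1, hA2⟩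
    constructor <;> intro i <;>
      simp [Matrix.smul_apply, ← Finset.mul_sum, hA1, hA2]

/-- Basis matrices for `DS`: `Dm a b = (E_a - E_3)(E_b - E_3)ᵀ`. -/
def Dm (a b : Fin 4) : Matrix (Fin 4) (Fin 4) ℝ :=
  fun p q => ((if p = a then 1 else 0) - (if p = 3 then 1 else 0)) *
    ((if q = b then 1 else 0) - (if q = 3 then 1 else 0))

lemma hc1 : S 0 1 * S 0 2 - S 0 2 * S 0 1 = !![0,1,-1,0;-1,0,1,0;1,-1,0,0;0,0,0,0] := by
  ext p q; fin_cases p <;> fin_cases q <;>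
    simp [S, Matrix.mul_apply, Fin.sum_univ_four, Matrix.vecHead, Matrix.vecTail] <;> norm_num

lemma hc2 : S 0 1 * S 0 3 - S 0 3 * S 0 1 = !![0,1,0,-1;-1,0,0,1;0,0,0,0;1,-1,0,0] := by
  ext p q; fin_cases p <;> fin_cases q <;>
    simp [S, Matrix.mul_apply, Fin.sum_univ_four, Matrix.vecHead, Matrix.vecTail] <;> norm_num

lemma hc3 : S 0 2 * S 0 3 - S 0 3 * S 0 2 = !![0,0,1,-1;0,0,0,0;-1,0,0,1;1,0,-1,0] := by
  ext p q; fin_cases p <;> fin_cases q <;>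
    simp [S, Matrix.mul_apply, Fin.sum_univ_four, Matrix.vecHead, Matrix.vecTail] <;> norm_num

set_option maxHeartbeats 1000000 in
/-- The Lie closure of the symmetric model SYM (the smallest linear subspace of
4×4 real matrices containing all the `S i j` and closed under the commutator)
is exactly the doubly stochastic model. -/
theorem lieClosure_SYM_eq_DS :
    sInf {L : Submodule ℝ (Matrix (Fin 4) (Fin 4) ℝ) |
        (∀ i j : Fin 4, i ≠ j → S i j ∈ L) ∧
        (∀ A B, A ∈ L → B ∈ L → A * B - B * A ∈ L)} = DS := by
  apply le_antisymm
  · apply sInf_le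
    constructor
    · intro i j hij
      constructor <;> intro k <;>
        fin_cases i <;> fin_cases j <;> fin_cases k <;>
          simp_all [S, Fin.sum_univ_four] <;> norm_num
    · rintro A B ⟨hA1, hA2⟩ ⟨hB1, hB2⟩
      have key1 : ∀ (X Y : Matrix (Fin 4) (Fin 4) ℝ), (∀ r, ∑ j, Y r j = 0) →
          ∀ i, ∑ j, (X * Y) i j = 0 := by
        intro X Y h i
        simp only [Matrix.mul_apply]
        rw [Finset.sum_comm]
        simp [← Finset.mul_sum, h]
      have key2 : ∀ (X Y : Matrix (Fin 4) (Fin 4) ℝ), (∀ r, ∑ i, X i r = 0) →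
          ∀ j, ∑ i, (X * Y) i j = 0 := by
        intro X Y h j
        simp only [Matrix.mul_apply]
        rw [Finset.sum_comm]
        simp [← Finset.sum_mul, h]
      constructor <;> intro i <;>
        simp [Matrix.sub_apply, Finset.sum_sub_distrib,
          key1 _ _ hA1, key1 _ _ hB1, key2 _ _ hA2, key2 _ _ hB2]
  · apply le_sInf
    rintro L ⟨hS, hC⟩
    rintro A ⟨h1, h2⟩
    have r0 := h1 0; have r1 := h1 1; have r2 := h1 2; have r3 := h1 3
    have c0 := h2 0; have c1 := h2 1; have c2 := h2 2; have c3 := h2 3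
    simp only [Fin.sum_univ_four] at r0 r1 r2 r3 c0 c1 c2 c3
    have m01 : S 0 1 ∈ L := hS 0 1 (by decide)
    have m02 : S 0 2 ∈ L := hS 0 2 (by decide)
    have m03 : S 0 3 ∈ L := hS 0 3 (by decide)
    have m12 : S 1 2 ∈ L := hS 1 2 (by decide)
    have m13 : S 1 3 ∈ L := hS 1 3 (by decide)
    have m23 : S 2 3 ∈ L := hS 2 3 (by decide)
    have mc1 : !![0,1,-1,0;-1,0,1,0;1,-1,0,0;0,0,0,0] ∈ L := hc1 ▸ hC _ _ m01 m02
    have mc2 : !![0,1,0,-1;-1,0,0,1;0,0,0,0;1,-1,0,0] ∈ L := hc2 ▸ hC _ _ m01 m03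
    have mc3 : !![0,0,1,-1;0,0,0,0;-1,0,0,1;1,0,-1,0] ∈ L := hc3 ▸ hC _ _ m02 m03
    have d00 : Dm 0 0 ∈ L := by
      have h : Dm 0 0 = (-1 : ℝ) • S 0 3 := by
        ext p q; fin_cases p <;> fin_cases q <;> simp [Dm, S, Matrix.vecHead, Matrix.vecTail] <;> norm_num
      rw [h]; exact L.smul_mem _ m03
    have d11 : Dm 1 1 ∈ L := by
      have h : Dm 1 1 = (-1 : ℝ) • S 1 3 := by
        ext p q; fin_cases p <;> fin_cases q <;> simp [Dm, S, Matrix.vecHead, Matrix.vecTail] <;> norm_num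
      rw [h]; exact L.smul_mem _ m13
    have d22 : Dm 2 2 ∈ L := by
      have h : Dm 2 2 = (-1 : ℝ) • S 2 3 := by
        ext p q; fin_cases p <;> fin_cases q <;> simp [Dm, S, Matrix.vecHead, Matrix.vecTail] <;> norm_num
      rw [h]; exact L.smul_mem _ m23
    have d01 : Dm 0 1 ∈ L := by
      have h : Dm 0 1 = (1/2 : ℝ) • S 0 1 + (-1/2 : ℝ) • S 0 3 + (-1/2 : ℝ) • S 1 3
          + (1/2 : ℝ) • (!![0,1,0,-1;-1,0,0,1;0,0,0,0;1,-1,0,0] : Matrix (Fin 4) (Fin 4) ℝ) := by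
        ext p q; fin_cases p <;> fin_cases q <;>
          simp [Dm, S, Matrix.vecHead, Matrix.vecTail] <;> norm_num
      rw [h]
      exact L.add_mem (L.add_mem (L.add_mem (L.smul_mem _ m01) (L.smul_mem _ m03))
        (L.smul_mem _ m13)) (L.smul_mem _ mc2)
    have d10 : Dm 1 0 ∈ L := by
      have h : Dm 1 0 = (1/2 : ℝ) • S 0 1 + (-1/2 : ℝ) • S 0 3 + (-1/2 : ℝ) • S 1 3
          + (-1/2 : ℝ) • (!![0,1,0,-1;-1,0,0,1;0,0,0,0;1,-1,0,0] : Matrix (Fin 4) (Fin 4) ℝ) := by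
        ext p q; fin_cases p <;> fin_cases q <;>
          simp [Dm, S, Matrix.vecHead, Matrix.vecTail] <;> norm_num
      rw [h]
      exact L.add_mem (L.add_mem (L.add_mem (L.smul_mem _ m01) (L.smul_mem _ m03))
        (L.smul_mem _ m13)) (L.smul_mem _ mc2)
    have d02 : Dm 0 2 ∈ L := by
      have h : Dm 0 2 = (1/2 : ℝ) • S 0 2 + (-1/2 : ℝ) • S 0 3 + (-1/2 : ℝ) • S 2 3
          + (1/2 : ℝ) • (!![0,0,1,-1;0,0,0,0;-1,0,0,1;1,0,-1,0] : Matrix (Fin 4) (Fin 4) ℝ) := by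
        ext p q; fin_cases p <;> fin_cases q <;>
          simp [Dm, S, Matrix.vecHead, Matrix.vecTail] <;> norm_num
      rw [h]
      exact L.add_mem (L.add_mem (L.add_mem (L.smul_mem _ m02) (L.smul_mem _ m03))
        (L.smul_mem _ m23)) (L.smul_mem _ mc3)
    have d20 : Dm 2 0 ∈ L := by
      have h : Dm 2 0 = (1/2 : ℝ) • S 0 2 + (-1/2 : ℝ) • S 0 3 + (-1/2 : ℝ) • S 2 3
          + (-1/2 : ℝ) • (!![0,0,1,-1;0,0,0,0;-1,0,0,1;1,0,-1,0] : Matrix (Fin 4) (Fin 4) ℝ) := by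
        ext p q; fin_cases p <;> fin_cases q <;>
          simp [Dm, S, Matrix.vecHead, Matrix.vecTail] <;> norm_num
      rw [h]
      exact L.add_mem (L.add_mem (L.add_mem (L.smul_mem _ m02) (L.smul_mem _ m03))
        (L.smul_mem _ m23)) (L.smul_mem _ mc3)
    have d12 : Dm 1 2 ∈ L := by
      have h : Dm 1 2 = (1/2 : ℝ) • S 1 2 + (-1/2 : ℝ) • S 1 3 + (-1/2 : ℝ) • S 2 3
          + (1/2 : ℝ) • (!![0,1,-1,0;-1,0,1,0;1,-1,0,0;0,0,0,0] : Matrix (Fin 4) (Fin 4) ℝ)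
          + (-1/2 : ℝ) • (!![0,1,0,-1;-1,0,0,1;0,0,0,0;1,-1,0,0] : Matrix (Fin 4) (Fin 4) ℝ)
          + (1/2 : ℝ) • (!![0,0,1,-1;0,0,0,0;-1,0,0,1;1,0,-1,0] : Matrix (Fin 4) (Fin 4) ℝ) := by
        ext p q; fin_cases p <;> fin_cases q <;>
          simp [Dm, S, Matrix.vecHead, Matrix.vecTail] <;> norm_num
      rw [h]
      exact L.add_mem (L.add_mem (L.add_mem (L.add_mem (L.add_mem
        (L.smul_mem _ m12) (L.smul_mem _ m13)) (L.smul_mem _ m23))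
        (L.smul_mem _ mc1)) (L.smul_mem _ mc2)) (L.smul_mem _ mc3)
    have d21 : Dm 2 1 ∈ L := by
      have h : Dm 2 1 = (1/2 : ℝ) • S 1 2 + (-1/2 : ℝ) • S 1 3 + (-1/2 : ℝ) • S 2 3
          + (-1/2 : ℝ) • (!![0,1,-1,0;-1,0,1,0;1,-1,0,0;0,0,0,0] : Matrix (Fin 4) (Fin 4) ℝ)
          + (1/2 : ℝ) • (!![0,1,0,-1;-1,0,0,1;0,0,0,0;1,-1,0,0] : Matrix (Fin 4) (Fin 4) ℝ)
          + (-1/2 : ℝ) • (!![0,0,1,-1;0,0,0,0;-1,0,0,1;1,0,-1,0] : Matrix (Fin 4) (Fin 4) ℝ) := by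
        ext p q; fin_cases p <;> fin_cases q <;>
          simp [Dm, S, Matrix.vecHead, Matrix.vecTail] <;> norm_num
      rw [h]
      exact L.add_mem (L.add_mem (L.add_mem (L.add_mem (L.add_mem
        (L.smul_mem _ m12) (L.smul_mem _ m13)) (L.smul_mem _ m23))
        (L.smul_mem _ mc1)) (L.smul_mem _ mc2)) (L.smul_mem _ mc3)
    have hA : A = A 0 0 • Dm 0 0 + A 0 1 • Dm 0 1 + A 0 2 • Dm 0 2
        + A 1 0 • Dm 1 0 + A 1 1 • Dm 1 1 + A 1 2 • Dm 1 2
        + A 2 0 • Dm 2 0 + A 2 1 • Dm 2 1 + A 2 2 • Dm 2 2 := by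
      ext p q
      fin_cases p <;> fin_cases q <;>
        simp [Dm, Matrix.add_apply, Matrix.smul_apply] <;>
        linarith [r0, r1, r2, r3, c0, c1, c2, c3]
    rw [hA]
    exact L.add_mem (L.add_mem (L.add_mem (L.add_mem (L.add_mem (L.add_mem
      (L.add_mem (L.add_mem (L.smul_mem _ d00) (L.smul_mem _ d01)) (L.smul_mem _ d02))
      (L.smul_mem _ d10)) (L.smul_mem _ d11)) (L.smul_mem _ d12))
      (L.smul_mem _ d20)) (L.smul_mem _ d21)) (L.smul_mem _ d22)
end

section
/- The span of the six rate matrices {Model 4.4b generators}, i.e., the set of 4×4 zero-column-sum matrices of the form [[*, γ, α, α],[γ, *, α, α],[β, β, *, δ],[β, β, δ, *]] with α, β, γ, δ ∈ ℝ (diagonal * chosen for zero column sums), is closed under the commutator [A,B] = AB - BA. -/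
/-- A general element of Model 4.4b of the Lie-Markov hierarchy: off-diagonal
entries `(1,2)=(2,1)=γ`, `(1,3)=(1,4)=(2,3)=(2,4)=α`, `(3,1)=(3,2)=(4,1)=(4,2)=β`,
`(3,4)=(4,3)=δ`, diagonals chosen so every column sums to zero. -/
def M44b (α β γ δ : ℝ) : Matrix (Fin 4) (Fin 4) ℝ :=
  !![-(γ + 2*β), γ, α, α;
     γ, -(γ + 2*β), α, α;
     β, β, -(2*α + δ), δ;
     β, β, δ, -(2*α + δ)]

set_option maxHeartbeats 1600000 in
/-- Model 4.4b is closed under the commutator `[A,B] = A*B - B*A`. -/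
theorem model44b_closed_under_bracket
    (α₁ β₁ γ₁ δ₁ α₂ β₂ γ₂ δ₂ : ℝ) :
    ∃ α β γ δ : ℝ,
      M44b α₁ β₁ γ₁ δ₁ * M44b α₂ β₂ γ₂ δ₂ - M44b α₂ β₂ γ₂ δ₂ * M44b α₁ β₁ γ₁ δ₁
        = M44b α β γ δ := by
  refine ⟨2*(α₁*β₂ - α₂*β₁), -(2*(α₁*β₂ - α₂*β₁)), 2*(α₁*β₂ - α₂*β₁),
    -(2*(α₁*β₂ - α₂*β₁)), ?_⟩
  ext i j
  fin_cases i <;> fin_cases j <;>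
    simp [M44b, Matrix.mul_apply, Fin.sum_univ_four, Matrix.sub_apply, Matrix.vecHead, Matrix.vecTail] <;> ring
end

section
/- For the span of B₁ = [[-2,1,1],[1,-2,-1],[1,1,0]] and B₂ = [[-2,1,-2],[1,-2,1],[1,1,1]], the only element b₁B₁ + b₂B₂ all of whose off-diagonal entries are nonnegative is the zero matrix (b₁ = b₂ = 0). -/
/-- The span of `B₁ = [[-2,1,1],[1,-2,-1],[1,1,0]]` and
`B₂ = [[-2,1,-2],[1,-2,1],[1,1,1]]` contains no nonzero stochastic matrix:
if all off-diagonal entries of `b₁•B₁ + b₂•B₂` are nonnegative then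
`b₁ = b₂ = 0`. -/
theorem toy_span_no_stochastic (b₁ b₂ : ℝ)
    (h : ∀ i j : Fin 3, i ≠ j →
      0 ≤ (b₁ • (!![-2, 1, 1; 1, -2, -1; 1, 1, 0] : Matrix (Fin 3) (Fin 3) ℝ)
          + b₂ • (!![-2, 1, -2; 1, -2, 1; 1, 1, 1] : Matrix (Fin 3) (Fin 3) ℝ)) i j) :
    b₁ = 0 ∧ b₂ = 0 := by
  have h01 := h 0 1 (by decide)
  have h02 := h 0 2 (by decide)
  have h12 := h 1 2 (by decide)
  simp [Matrix.add_apply, Matrix.smul_apply] at h01 h02 h12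
  constructor <;> linarith
end
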